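/- For every monadic deterministic macro tree transducer with regular look-ahead M one can construct a normalized monadic deterministic macro tree transducer with regular look-ahead N such that τ_N = { (expand(s), expand(t)) : (s, t) ∈ τ_M }, where for a monadic tree t = a1(⋯ an(e) ⋯) with e of rank 0, expand(t) = a1(⋯ an(e'(⊥)) ⋯) is obtained by turning the rank-0 symbol e into a rank-1 symbol e' placed above the unique rank-0 symbol ⊥. -/

import Mathlib

/-! ## Finite ordered ranked trees -/

/-- Finite ordered labeled trees. -/
inductive RTree (α : Type) : Type
  | node : α → List (RTree α) → RTree α

namespace RTree

variable {α β : Type}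

/-- The label of the root node. -/
def label : RTree α → α
  | node a _ => a

mutual
  /-- The size (number of nodes) of a tree. -/
  def size : RTree α → ℕ
    | node _ ts => 1 + sizeList ts
  def sizeList : List (RTree α) → ℕ
    | [] => 0
    | t :: ts => size t + sizeList ts
end

mutual
  /-- The height of a tree (a leaf has height 1). -/
  def height : RTree α → ℕ
    | node _ ts => 1 + heightList ts
  def heightList : List (RTree α) → ℕ
    | [] => 0
    | t :: ts => max (height t) (heightList ts)
end

mutual
  /-- Relabeling of a tree. -/
  def map (f : α → β) : RTree α → RTree β
    | node a ts => node (f a) (mapList f ts)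
  def mapList (f : α → β) : List (RTree α) → List (RTree β)
    | [] => []
    | t :: ts => map f t :: mapList f ts
end

/-- `WF rk t` means `t` is a tree over the ranked alphabet with rank function `rk`:
every node labeled `a` has exactly `rk a` children.  Thus `T_Σ = {t | WF rk t}`. -/
inductive WF (rk : α → ℕ) : RTree α → Prop
  | node {a : α} {ts : List (RTree α)} :
      ts.length = rk a → (∀ t ∈ ts, WF rk t) → WF rk (node a ts)

/-- `SubtreeAt t u r`: `u` is (the Dewey path of) a node of `t` and `r` is the
subtree of `t` rooted at `u`. -/
inductive SubtreeAt : RTree α → List ℕ → RTree α → Prop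
  | here (t : RTree α) : SubtreeAt t [] t
  | child {a : α} {ts : List (RTree α)} {i : ℕ} {u : List ℕ} {ti r : RTree α} :
      ts[i]? = some ti → SubtreeAt ti u r → SubtreeAt (node a ts) (i :: u) r

/-- `ReplaceAt t u r t'`: `u` is a node of `t`, and `t'` is the tree `t[u ← r]`
obtained from `t` by replacing the subtree rooted at `u` by `r`. -/
inductive ReplaceAt : RTree α → List ℕ → RTree α → RTree α → Prop
  | here (t r : RTree α) : ReplaceAt t [] r r
  | child {a : α} {ts : List (RTree α)} {i : ℕ} {u : List ℕ} {r ti ti' : RTree α} :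
      ts[i]? = some ti → ReplaceAt ti u r ti' →
      ReplaceAt (node a ts) (i :: u) r (node a (ts.set i ti'))

end RTree

/-- A (complete) deterministic finite-state bottom-up tree automaton over the
alphabet `S`, with state set `P` and final states `final`. -/
structure BUA (S P : Type) where
  delta : S → List P → P
  final : Set P

variable {S P : Type}

mutual
  /-- The state reached by a bottom-up automaton on a tree. -/
  def buaRun (A : BUA S P) : RTree S → P
    | .node a ts => A.delta a (buaRunList A ts)
  def buaRunList (A : BUA S P) : List (RTree S) → List P
    | [] => []
    | t :: ts => buaRun A t :: buaRunList A ts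
end

/-- A tree language over the ranked alphabet `(S, rk)` is regular if it is recognized
by a deterministic finite-state bottom-up tree automaton. -/
def RegularTreeLang (rk : S → ℕ) (L : Set (RTree S)) : Prop :=
  ∃ (P : Type) (_ : Fintype P) (A : BUA S P),
    L = {t | RTree.WF rk t ∧ buaRun A t ∈ A.final}
/-! ## Deterministic macro tree transducers

A state of rank `m+1` is encoded by `prm q = m` (its number of context parameters).
Right-hand sides of rules are trees over `Δ ∪ Q ∪ X ∪ Y`, where every `Q`-labeled
node has an input variable `x_i` as its (implicit) first child; this is encoded by
the constructor `MRhs.call q i ps`.  A top-down tree transducer is exactly a macro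
tree transducer all of whose states have rank one (`prm q = 0`).

To be able to talk about partial inputs `s[u ← x]`, input trees are trees over
`Option S`, where `none` plays the role of the fresh rank-0 symbol `x`; an
ordinary input tree `s` is represented as `RTree.map some s`.  Outputs (sentential
forms) are trees over the alphabet `PL Q D`: output symbols `PL.out d`, unresolved
state calls `PL.st q` (i.e. `q(x, t₁, …, t_m)`, whose children are the current
parameter trees), and formal context parameters `PL.pr j` (i.e. `y_{j+1}`). -/

/-- Labels of sentential forms produced by a macro tree transducer. -/
inductive PL (Q D : Type) : Type
  | out : D → PL Q D
  | st : Q → PL Q D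
  | pr : ℕ → PL Q D

/-- Right-hand sides of rules of a macro tree transducer with states `Q` and output
alphabet `D`: `out d ts` is an output symbol with subtrees, `param j` is the context
parameter `y_{j+1}`, and `call q i ps` is a state call `q(x_{i+1}, ps)`. -/
inductive MRhs (Q D : Type) : Type
  | out : D → List (MRhs Q D) → MRhs Q D
  | param : ℕ → MRhs Q D
  | call : Q → ℕ → List (MRhs Q D) → MRhs Q D

/-- Well-formedness of a right-hand side for a rule of a state with `m` parameters
and an input symbol of rank `k`: output symbols have the right number of children,
parameters are among `y_1, …, y_m`, input variables are among `x_1, …, x_k`, and a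
call of state `q'` passes exactly `prm q'` parameter trees. -/
inductive RhsWF {Q D : Type} (rkD : D → ℕ) (prm : Q → ℕ) (k m : ℕ) : MRhs Q D → Prop
  | out {d ts} : ts.length = rkD d → (∀ t ∈ ts, RhsWF rkD prm k m t) →
      RhsWF rkD prm k m (.out d ts)
  | param {j} : j < m → RhsWF rkD prm k m (.param j)
  | call {q i ps} : i < k → ps.length = prm q → (∀ t ∈ ps, RhsWF rkD prm k m t) →
      RhsWF rkD prm k m (.call q i ps)

/-- A deterministic macro tree transducer with states `Q`, input alphabet `(S, rkS)`
and output alphabet `(D, rkD)`.  `prm q` is the number of context parameters of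
state `q` (so `q` has rank `prm q + 1`); `rules q σ` is the right-hand side of the
`(q,σ)`-rule, if present (determinism: at most one rule per pair). -/
structure MTT (Q S D : Type) where
  rkS : S → ℕ
  rkD : D → ℕ
  prm : Q → ℕ
  init : Q
  rules : Q → S → Option (MRhs Q D)

namespace MTT

variable {Q S D : Type}

/-- `M` is a well-formed macro tree transducer: the initial state has rank one and
all right-hand sides are well-formed. -/
def Proper (M : MTT Q S D) : Prop :=
  M.prm M.init = 0 ∧
    ∀ q σ r, M.rules q σ = some r → RhsWF M.rkD M.prm (M.rkS σ) (M.prm q) r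

/-- `M` is total: there is exactly one rule for every state and input symbol. -/
def Total (M : MTT Q S D) : Prop := ∀ q σ, (M.rules q σ).isSome

end MTT

/-- A top-down tree transducer is a macro tree transducer each of whose states has
rank one, i.e. no context parameters. -/
def IsTopDown {Q S D : Type} (M : MTT Q S D) : Prop := ∀ q, M.prm q = 0

/-- A macro tree transducer is monadic if its input and output ranked alphabets
only contain symbols of rank 1 and rank 0. -/
def MTT.Monadic {Q S D : Type} (M : MTT Q S D) : Prop :=
  (∀ σ, M.rkS σ ≤ 1) ∧ (∀ d, M.rkD d ≤ 1)

variable {Q S D : Type}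

mutual
  /-- Second-order substitution of the parameter leaves `y_{j+1}` of a sentential
  form by the trees `vs`. -/
  def psubst (vs : List (RTree (PL Q D))) : RTree (PL Q D) → RTree (PL Q D)
    | .node (.pr j) _ => vs.getD j (.node (.pr j) [])
    | .node (.out d) ts => .node (.out d) (psubstList vs ts)
    | .node (.st q) ts => .node (.st q) (psubstList vs ts)
  def psubstList (vs : List (RTree (PL Q D))) :
      List (RTree (PL Q D)) → List (RTree (PL Q D))
    | [] => []
    | t :: ts => psubst vs t :: psubstList vs ts
end

/-- The fresh rank-0 input symbol `x` used in partial inputs `s[u ← x]`. -/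
def xLeaf {S : Type} : RTree (Option S) := .node none []

mutual
  /-- Big-step semantics of a macro tree transducer: `MEval M q s t` means that the
  computation of `M` started in state `q` on the input tree `s` (a tree over
  `Option S`, where `none` is the fresh symbol `x` of partial inputs) produces the
  (sentential form) tree `t`.  On the symbol `x` the computation blocks, yielding
  the unresolved call `q(x, y_1, …, y_m)`.  For `s ∈ T_Σ` (no occurrence of `x`)
  and well-formed transducers, `t` contains no `PL.st` labels, and `M_q(s)` is
  defined iff such a `t` exists; determinism makes `t` unique. -/
  inductive MEval (M : MTT Q S D) : Q → RTree (Option S) → RTree (PL Q D) → Prop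
    | atX (q : Q) :
        MEval M q (.node none [])
          (.node (.st q) ((List.range (M.prm q)).map fun j => .node (.pr j) []))
    | step {q : Q} {σ : S} {ss : List (RTree (Option S))} {r : MRhs Q D}
        {t : RTree (PL Q D)} :
        M.rules q σ = some r → MExpand M ss r t → MEval M q (.node (some σ) ss) t

  /-- Evaluation of a right-hand side with current input subtrees `ss`. -/
  inductive MExpand (M : MTT Q S D) :
      List (RTree (Option S)) → MRhs Q D → RTree (PL Q D) → Prop
    | out {ss d ts us} : MExpandList M ss ts us →
        MExpand M ss (.out d ts) (.node (.out d) us)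
    | param {ss j} : MExpand M ss (.param j) (.node (.pr j) [])
    | call {ss : List (RTree (Option S))} {q : Q} {i : ℕ} {ps : List (MRhs Q D)}
        {si : RTree (Option S)} {vs : List (RTree (PL Q D))} {u : RTree (PL Q D)} :
        ss[i]? = some si → MExpandList M ss ps vs → MEval M q si u →
        MExpand M ss (.call q i ps) (psubst vs u)

  inductive MExpandList (M : MTT Q S D) :
      List (RTree (Option S)) → List (MRhs Q D) → List (RTree (PL Q D)) → Prop
    | nil {ss} : MExpandList M ss [] []
    | cons {ss t ts u us} : MExpand M ss t u → MExpandList M ss ts us →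
        MExpandList M ss (t :: ts) (u :: us)
end

/-- The translation `τ_M ⊆ T_Σ × T_Δ` realized by a macro tree transducer `M`
(the graph of the partial function `τ_M : T_Σ ⇀ T_Δ`). -/
def MTT.tau (M : MTT Q S D) : Set (RTree S × RTree D) :=
  {p | RTree.WF M.rkS p.1 ∧ MEval M M.init (RTree.map some p.1) (RTree.map PL.out p.2)}

/-! ## Macro tree transducers with regular look-ahead -/

/-- A deterministic bottom-up look-ahead automaton over the alphabet `S` with
state set `P` (given by its transition function; no final states). -/
structure LA (S P : Type) where
  delta : S → List P → Option P

variable {S P : Type}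

mutual
  /-- `LARun A s p`: the look-ahead automaton `A` recognizes the tree `s` in
  state `p`. -/
  inductive LARun (A : LA S P) : RTree S → P → Prop
    | node {σ : S} {ss : List (RTree S)} {ps : List P} {p : P} :
        LARunList A ss ps → A.delta σ ps = some p → LARun A (.node σ ss) p
  inductive LARunList (A : LA S P) : List (RTree S) → List P → Prop
    | nil : LARunList A [] []
    | cons {s ss p ps} : LARun A s p → LARunList A ss ps →
        LARunList A (s :: ss) (p :: ps)
end

/-- A deterministic macro tree transducer with regular look-ahead: in addition to
the data of a macro tree transducer it carries a look-ahead automaton `la`, and a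
rule `rules q σ ps` (at most one per state, input symbol and tuple of look-ahead
states) is applicable to an input subtree `σ(s₁,…,s_k)` only if the look-ahead
automaton recognizes `s_i` in state `ps_i` for every `i`. -/
structure MTTR (Q S D P : Type) where
  rkS : S → ℕ
  rkD : D → ℕ
  prm : Q → ℕ
  init : Q
  la : LA S P
  rules : Q → S → List P → Option (MRhs Q D)

namespace MTTR

variable {Q D : Type}

/-- Well-formedness of a macro tree transducer with look-ahead. -/
def Proper (M : MTTR Q S D P) : Prop :=
  M.prm M.init = 0 ∧
    ∀ q σ ps r, M.rules q σ ps = some r → RhsWF M.rkD M.prm (M.rkS σ) (M.prm q) r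

/-- A top-down tree transducer (with look-ahead) is a macro tree transducer (with
look-ahead) each of whose states has rank one, i.e. no context parameters. -/
def IsTopDown (M : MTTR Q S D P) : Prop := ∀ q, M.prm q = 0

/-- A macro tree transducer (with look-ahead) is monadic if its input and output
alphabets only contain symbols of rank 1 and rank 0. -/
def Monadic (M : MTTR Q S D P) : Prop :=
  (∀ σ, M.rkS σ ≤ 1) ∧ (∀ d, M.rkD d ≤ 1)

end MTTR

variable {Q D : Type}

mutual
  /-- Big-step semantics of a macro tree transducer with regular look-ahead. -/
  inductive REval (M : MTTR Q S D P) : Q → RTree S → RTree (PL Q D) → Prop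
    | step {q : Q} {σ : S} {ss : List (RTree S)} {ps : List P} {r : MRhs Q D}
        {t : RTree (PL Q D)} :
        LARunList M.la ss ps → M.rules q σ ps = some r → RExpand M ss r t →
        REval M q (.node σ ss) t

  inductive RExpand (M : MTTR Q S D P) :
      List (RTree S) → MRhs Q D → RTree (PL Q D) → Prop
    | out {ss d ts us} : RExpandList M ss ts us →
        RExpand M ss (.out d ts) (.node (.out d) us)
    | param {ss j} : RExpand M ss (.param j) (.node (.pr j) [])
    | call {ss : List (RTree S)} {q : Q} {i : ℕ} {ps : List (MRhs Q D)}
        {si : RTree S} {vs : List (RTree (PL Q D))} {u : RTree (PL Q D)} :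
        ss[i]? = some si → RExpandList M ss ps vs → REval M q si u →
        RExpand M ss (.call q i ps) (psubst vs u)

  inductive RExpandList (M : MTTR Q S D P) :
      List (RTree S) → List (MRhs Q D) → List (RTree (PL Q D)) → Prop
    | nil {ss} : RExpandList M ss [] []
    | cons {ss t ts u us} : RExpand M ss t u → RExpandList M ss ts us →
        RExpandList M ss (t :: ts) (u :: us)
end

/-- The translation `τ_M ⊆ T_Σ × T_Δ` realized by a macro tree transducer with
regular look-ahead. -/
def MTTR.tau (M : MTTR Q S D P) : Set (RTree S × RTree D) :=
  {p | RTree.WF M.rkS p.1 ∧ REval M M.init p.1 (RTree.map PL.out p.2)}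

/-- `ParamOccurs j r`: the context parameter `y_{j+1}` occurs in the right-hand
side `r`. -/
inductive ParamOccurs {Q D : Type} (j : ℕ) : MRhs Q D → Prop
  | param : ParamOccurs j (.param j)
  | out {d ts t} : t ∈ ts → ParamOccurs j t → ParamOccurs j (.out d ts)
  | call {q i ps t} : t ∈ ps → ParamOccurs j t → ParamOccurs j (.call q i ps)

/-- A macro tree transducer with look-ahead is nondeleting if every parameter of a
state occurs in the right-hand side of each of its rules. -/
def MTTR.Nondeleting {Q S D P : Type} (M : MTTR Q S D P) : Prop :=
  ∀ q σ ps r, M.rules q σ ps = some r → ∀ j < M.prm q, ParamOccurs j r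

/-- A monadic macro tree transducer (with look-ahead) is normalized if (N0) it is
nondeleting, (N1) every state has rank two or one (at most one parameter), and
(N2) the input and output alphabets each contain exactly one symbol of rank 0. -/
def MTTR.Normalized {Q S D P : Type} (M : MTTR Q S D P) : Prop :=
  MTTR.Nondeleting M ∧ (∀ q, M.prm q ≤ 1) ∧
    (∃! σ, M.rkS σ = 0) ∧ (∃! d, M.rkD d = 0)

/-- `ExpandRel t t'` relates a monadic tree `t = a1(⋯ an(e) ⋯)` to the tree
`expand(t) = a1(⋯ an(e(⊥)) ⋯)` over the expanded alphabet `Option α`, in which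
every original symbol (in particular the original rank-0 symbol `e`) has rank 1
and `none` is the unique new rank-0 symbol `⊥`. -/
inductive ExpandRel {α : Type} : RTree α → RTree (Option α) → Prop
  | leaf {a : α} : ExpandRel (.node a []) (.node (some a) [.node none []])
  | step {a : α} {c : RTree α} {c' : RTree (Option α)} :
      ExpandRel c c' → ExpandRel (.node a [c]) (.node (some a) [c'])

/-- The rank function of an expanded monadic alphabet: all original symbols get
rank 1 and the new symbol `⊥ = none` has rank 0. -/
def expandRk {α : Type} : Option α → ℕ
  | none => 0
  | some _ => 1

/-! ## Auxiliary development -/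

section AuxDev

theorem sizeOf_of_getElem? {α : Type} [SizeOf α] {l : List α} {i : ℕ} {a : α}
    (h : l[i]? = some a) : sizeOf a < sizeOf l := by
  exact List.sizeOf_lt_of_mem (List.mem_of_getElem? h)

variable {S P : Type}

theorem laRunList_det_aux {A : LA S P} :
    ∀ ss : List (RTree S), (∀ s ∈ ss, ∀ p p', LARun A s p → LARun A s p' → p = p') →
      ∀ ps ps', LARunList A ss ps → LARunList A ss ps' → ps = ps' := by
  intro ss
  induction ss with
  | nil => intro _ ps ps' h1 h2; cases h1; cases h2; rfl
  | cons s ss ih =>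
    intro hm ps ps' h1 h2
    cases h1 with | cons hp hps =>
    cases h2 with | cons hp' hps' =>
    rw [hm s (by simp) _ _ hp hp',
      ih (fun s hs => hm s (by simp [hs])) _ _ hps hps']

theorem laRun_det {A : LA S P} :
    ∀ (n : ℕ) (s : RTree S), sizeOf s ≤ n →
      ∀ p p', LARun A s p → LARun A s p' → p = p' := by
  intro n
  induction n with
  | zero => intro s hs; cases s with | node a ts => simp at hs
  | succ n ih =>
    intro s hs p p' h1 h2
    cases h1 with | @node σ ss ps _ hps hδ =>
    cases h2 with | @node _ _ ps' _ hps' hδ' =>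
    have hm : ∀ s' ∈ ss, ∀ p p', LARun A s' p → LARun A s' p' → p = p' := by
      intro s' hs' p p' hh hh'
      have : sizeOf s' < sizeOf (RTree.node σ ss) := by
        have := List.sizeOf_lt_of_mem hs'; simp; omega
      exact ih s' (by omega) p p' hh hh'
    rw [laRunList_det_aux ss hm ps ps' hps hps'] at hδ
    rw [hδ] at hδ'; exact Option.some.inj hδ'

theorem laRun_det' {A : LA S P} {s : RTree S} {p p' : P}
    (h1 : LARun A s p) (h2 : LARun A s p') : p = p' :=
  laRun_det (sizeOf s) s le_rfl p p' h1 h2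

theorem laRunList_det' {A : LA S P} {ss : List (RTree S)} {ps ps' : List P}
    (h1 : LARunList A ss ps) (h2 : LARunList A ss ps') : ps = ps' :=
  laRunList_det_aux ss (fun s _ p p' => laRun_det' ) ps ps' h1 h2

end AuxDev
section Det

variable {Q S D P : Type} {M : MTTR Q S D P}

theorem rexpandList_length {ss : List (RTree S)} {rs : List (MRhs Q D)}
    {us : List (RTree (PL Q D))} (h : RExpandList M ss rs us) :
    us.length = rs.length := by
  induction rs generalizing us with
  | nil => cases h; rfl
  | cons r rs ih => cases h with | cons h1 h2 => simp [ih h2]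

theorem rexpandList_get {ss : List (RTree S)} {rs : List (MRhs Q D)}
    {us : List (RTree (PL Q D))} (h : RExpandList M ss rs us) :
    ∀ (j : ℕ) (pj : MRhs Q D), rs[j]? = some pj → ∃ v, us[j]? = some v ∧ RExpand M ss pj v := by
  induction rs generalizing us with
  | nil => intro j pj hj; simp at hj
  | cons r rs ih =>
    cases h with | @cons _ _ _ u us h1 h2 =>
    intro j pj hj
    cases j with
    | zero => simp at hj; subst hj; exact ⟨u, by simp, h1⟩
    | succ j =>
      simp at hj
      obtain ⟨v, hv, hre⟩ := ih h2 j pj hj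
      exact ⟨v, by simpa using hv, hre⟩

theorem rexp_det_aux :
    ∀ (n : ℕ) (ss : List (RTree S))
      (_ : ∀ si, si ∈ ss → ∀ q u u', REval M q si u → REval M q si u' → u = u'),
      (∀ r : MRhs Q D, sizeOf r ≤ n → ∀ u u',
        RExpand M ss r u → RExpand M ss r u' → u = u') ∧
      (∀ rs : List (MRhs Q D), sizeOf rs ≤ n → ∀ us us',
        RExpandList M ss rs us → RExpandList M ss rs us' → us = us') := by
  intro n
  induction n with
  | zero =>
    intro ss HE
    constructor
    · intro r hr; cases r <;> simp at hr
    · intro rs hrs; cases rs <;> simp at hrs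
  | succ n ih =>
    intro ss HE
    constructor
    · intro r hr u u' h1 h2
      cases r with
      | out d ts =>
        cases h1 with | out hus =>
        cases h2 with | out hus' =>
        simp at hr
        rw [(ih ss HE).2 ts (by omega) _ _ hus hus']
      | param j => cases h1; cases h2; rfl
      | call q' i ps =>
        cases h1 with | @call _ _ _ _ si vs u0 hsi hvs hev =>
        cases h2 with | @call _ _ _ _ si' vs' u0' hsi' hvs' hev' =>
        rw [hsi] at hsi'
        injection hsi' with hsi'; subst hsi'
        simp at hr
        rw [(ih ss HE).2 ps (by omega) _ _ hvs hvs',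
          HE si (List.mem_of_getElem? hsi) q' u0 u0' hev hev']
    · intro rs hrs us us' h1 h2
      cases rs with
      | nil => cases h1; cases h2; rfl
      | cons r rs =>
        cases h1 with | cons ha hb =>
        cases h2 with | cons ha' hb' =>
        simp at hrs
        rw [(ih ss HE).1 r (by omega) _ _ ha ha',
          (ih ss HE).2 rs (by omega) _ _ hb hb']

theorem reval_det :
    ∀ (n : ℕ) (s : RTree S), sizeOf s ≤ n →
      ∀ q u u', REval M q s u → REval M q s u' → u = u' := by
  intro n
  induction n with
  | zero => intro s hs; cases s with | node a ts => simp at hs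
  | succ n ih =>
    intro s hs q u u' h1 h2
    cases h1 with | @step _ σ ss ps r _ hps hr hex =>
    cases h2 with | @step _ _ _ ps' r' _ hps' hr' hex' =>
    rw [laRunList_det' hps hps'] at hr
    rw [hr] at hr'
    injection hr' with hr'; subst hr'
    have HE : ∀ si, si ∈ ss → ∀ q u u', REval M q si u → REval M q si u' → u = u' := by
      intro si hsi q u u' hh hh'
      have : sizeOf si < sizeOf (RTree.node σ ss) := by
        have := List.sizeOf_lt_of_mem hsi; simp; omega
      exact ih si (by omega) q u u' hh hh'
    exact (rexp_det_aux (sizeOf r) ss HE).1 r le_rfl _ _ hex hex'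

theorem reval_det' {s : RTree S} {q : Q} {u u' : RTree (PL Q D)}
    (h1 : REval M q s u) (h2 : REval M q s u') : u = u' :=
  reval_det (sizeOf s) s le_rfl q u u' h1 h2

theorem rexpand_det' {ss : List (RTree S)} {r : MRhs Q D} {u u' : RTree (PL Q D)}
    (h1 : RExpand M ss r u) (h2 : RExpand M ss r u') : u = u' :=
  (rexp_det_aux (sizeOf r) ss (fun si _ q u u' => reval_det')).1 r le_rfl _ _ h1 h2

end Det
section Constr

variable {Q S D P : Type}

mutual
  /-- Leaf information of a right-hand side. -/
  def leafInfo (K : ℕ) (f : Q → Option (Option (Fin K))) :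
      MRhs Q D → Option (Option (Fin K))
    | .out _ [] => some none
    | .out _ (t :: _) => leafInfo K f t
    | .param j => if h : j < K then some (some ⟨j, h⟩) else none
    | .call q' _ ps =>
      match leafInfoList K f ps, f q' with
      | some _, some none => some none
      | some κs, some (some j) => κs[j.val]?
      | _, _ => none
  def leafInfoList (K : ℕ) (f : Q → Option (Option (Fin K))) :
      List (MRhs Q D) → Option (List (Option (Fin K)))
    | [] => some []
    | t :: ts =>
      match leafInfo K f t, leafInfoList K f ts with
      | some κ, some κs => some (κ :: κs)
      | _, _ => none
end

mutual
  /-- Translation of a right-hand side of `M` into a right-hand side of the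
  normalized transducer, following the output spine. -/
  def trRhs (K : ℕ) (f : Q → Option (Option (Fin K))) :
      MRhs Q D → Option (MRhs (Q × Option (Fin K)) (Option D))
    | .out d [] => some (.out (some d) [.out none []])
    | .out d (t :: _) => (trRhs K f t).map fun t' => .out (some d) [t']
    | .param _ => some (.param 0)
    | .call q' i ps =>
      match f q' with
      | some none => some (.call (q', none) i [])
      | some (some j) =>
        (trRhsNth K f ps j.val).map fun t' => .call (q', some j) i [t']
      | none => none
  def trRhsNth (K : ℕ) (f : Q → Option (Option (Fin K))) :
      List (MRhs Q D) → ℕ → Option (MRhs (Q × Option (Fin K)) (Option D))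
    | [], _ => none
    | t :: _, 0 => trRhs K f t
    | _ :: ts, j + 1 => trRhsNth K f ts j
end

theorem trRhs_call_ground {K : ℕ} {f : Q → Option (Option (Fin K))} {q' : Q}
    {i : ℕ} {ps : List (MRhs Q D)} (hf : f q' = some none) :
    trRhs K f (.call q' i ps) = some (.call (q', none) i []) := by
  rw [trRhs, hf]

theorem trRhs_call_sel {K : ℕ} {f : Q → Option (Option (Fin K))} {q' : Q}
    {i : ℕ} {ps : List (MRhs Q D)} {j : Fin K} (hf : f q' = some (some j)) :
    trRhs K f (.call q' i ps) =
      (trRhsNth K f ps j.val).map fun t' => .call (q', some j) i [t'] := by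
  rw [trRhs, hf]

theorem leafInfo_call_ground {K : ℕ} {f : Q → Option (Option (Fin K))} {q' : Q}
    {i : ℕ} {ps : List (MRhs Q D)} {κs : List (Option (Fin K))}
    (hL : leafInfoList K f ps = some κs) (hf : f q' = some none) :
    leafInfo K f (.call q' i ps) = some none := by
  rw [leafInfo, hL, hf]

theorem leafInfo_call_sel {K : ℕ} {f : Q → Option (Option (Fin K))} {q' : Q}
    {i : ℕ} {ps : List (MRhs Q D)} {κs : List (Option (Fin K))} {j : Fin K}
    (hL : leafInfoList K f ps = some κs) (hf : f q' = some (some j)) :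
    leafInfo K f (.call q' i ps) = κs[j.val]? := by
  rw [leafInfo, hL, hf]

theorem trRhsNth_eq_of_get {K : ℕ} {f : Q → Option (Option (Fin K))}
    {ps : List (MRhs Q D)} : ∀ {j : ℕ} {pj : MRhs Q D}, ps[j]? = some pj →
      trRhsNth K f ps j = trRhs K f pj := by
  induction ps with
  | nil => intro j pj h; simp at h
  | cons t ts ih =>
    intro j pj h
    cases j with
    | zero => simp at h; subst h; rw [trRhsNth]
    | succ j => simp at h; rw [trRhsNth]; exact ih h

/-- `SpineTr rkD K t κ t'`: the sentential form `t` is a monadic output chain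
whose leaf is the parameter `y_{κ+1}` (if `κ = some _`) or a ground rank-0
output symbol (if `κ = none`), and `t'` is its translation over the expanded
output alphabet, ending in `y_1` resp. in the expanded symbol over `⊥`. -/
inductive SpineTr {Q' : Type} (rkD : D → ℕ) (K : ℕ) :
    RTree (PL Q D) → Option (Fin K) → RTree (PL Q' (Option D)) → Prop
  | prleaf (jf : Fin K) :
      SpineTr rkD K (.node (.pr jf.val) []) (some jf) (.node (.pr 0) [])
  | ground {d : D} : rkD d = 0 →
      SpineTr rkD K (.node (.out d) []) none
        (.node (.out (some d)) [.node (.out none) []])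
  | cons {d : D} {t : RTree (PL Q D)} {κ : Option (Fin K)}
      {t' : RTree (PL Q' (Option D))} : rkD d = 1 →
      SpineTr rkD K t κ t' →
      SpineTr rkD K (.node (.out d) [t]) κ (.node (.out (some d)) [t'])

end Constr

section NDef

variable {Q S D P : Type} (M : MTTR Q S D P) [Fintype Q]

/-- Bound on the number of parameters of states of `M`. -/
def Kk : ℕ := Finset.univ.sup M.prm

theorem prm_le_Kk (q : Q) : M.prm q ≤ Kk M :=
  Finset.le_sup (Finset.mem_univ q)

/-- States of the normalized transducer. -/
abbrev NQ := Q × Option (Fin (Kk M))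

/-- Look-ahead states of the normalized transducer. -/
abbrev NP := Option (P × (Q → Option (Option (Fin (Kk M)))))

/-- Look-ahead transition function of the normalized transducer. -/
def ndelta : Option S → List (NP M) → Option (NP M)
  | none, [] => some none
  | some σ, [none] =>
    if M.rkS σ = 0 then
      (M.la.delta σ []).map fun p =>
        some (p, fun q => (M.rules q σ []).bind (leafInfo (Kk M) fun _ => none))
    else none
  | some σ, [some (p1, f1)] =>
    if M.rkS σ = 1 then
      (M.la.delta σ [p1]).map fun p =>
        some (p, fun q => (M.rules q σ [p1]).bind (leafInfo (Kk M) f1))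
    else none
  | _, _ => none

/-- The normalized monadic transducer. -/
def NN : MTTR (NQ M) (Option S) (Option D) (NP M) where
  rkS := expandRk
  rkD := expandRk
  prm := fun q => match q.2 with | none => 0 | some _ => 1
  init := (M.init, none)
  la := ⟨ndelta M⟩
  rules := fun q σ' πs =>
    match σ', πs with
    | some σ, [none] =>
      if M.rkS σ = 0 then
        (M.rules q.1 σ []).bind fun r =>
          if leafInfo (Kk M) (fun _ => none) r = some q.2 then
            trRhs (Kk M) (fun _ => none) r
          else none
      else none
    | some σ, [some (p1, f1)] =>
      if M.rkS σ = 1 then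
        (M.rules q.1 σ [p1]).bind fun r =>
          if leafInfo (Kk M) f1 r = some q.2 then trRhs (Kk M) f1 r else none
      else none
    | _, _ => none

end NDef
section SpineLemmas

variable {Q Q' S D : Type} {rkD : D → ℕ} {K : ℕ}

theorem spineTr_det {t : RTree (PL Q D)} {κ1 κ2 : Option (Fin K)}
    {t1 t2 : RTree (PL Q' (Option D))} (h1 : SpineTr rkD K t κ1 t1)
    (h2 : SpineTr rkD K t κ2 t2) : κ1 = κ2 ∧ t1 = t2 := by
  induction h1 generalizing κ2 t2 with
  | prleaf jf =>
    have inv : ∀ (j : ℕ) (κ2' : Option (Fin K)) (t2' : RTree (PL Q' (Option D))),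
        SpineTr (Q := Q) rkD K (.node (.pr j) []) κ2' t2' →
        ∃ jf' : Fin K, κ2' = some jf' ∧ jf'.val = j ∧ t2' = .node (.pr 0) [] := by
      intro j κ2' t2' h
      cases h with | prleaf jf' => exact ⟨jf', rfl, rfl, rfl⟩
    obtain ⟨jf', hκ, hval, ht⟩ := inv jf.val κ2 t2 h2
    have : jf' = jf := Fin.ext hval
    subst this
    exact ⟨hκ.symm, ht.symm⟩
  | ground hd => cases h2 with | ground => exact ⟨rfl, rfl⟩
  | cons hd h ih =>
    cases h2 with
    | cons hd' h' =>
      obtain ⟨h1, h2⟩ := ih h'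
      exact ⟨h1, by rw [h2]⟩

theorem spine_ground_psubst {t : RTree (PL Q D)} {t' : RTree (PL Q' (Option D))}
    {κ : Option (Fin K)} (h : SpineTr rkD K t κ t') (hκ : κ = none) :
    (∀ vs, psubst vs t = t) ∧ (∀ ws, psubst ws t' = t') := by
  induction h with
  | prleaf jf => simp at hκ
  | ground hd =>
    exact ⟨fun vs => by simp [psubst, psubstList],
      fun ws => by simp [psubst, psubstList]⟩
  | cons hd h ih =>
    obtain ⟨ih1, ih2⟩ := ih hκ
    exact ⟨fun vs => by simp [psubst, psubstList, ih1],
      fun ws => by simp [psubst, psubstList, ih2]⟩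

theorem spine_param_psubst {t : RTree (PL Q D)} {t' : RTree (PL Q' (Option D))}
    {κ0 : Option (Fin K)} (h : SpineTr rkD K t κ0 t') {jf : Fin K}
    (hκ : κ0 = some jf) :
    ∀ (vs : List (RTree (PL Q D))) (v : RTree (PL Q D)), vs[jf.val]? = some v →
      ∀ (κ : Option (Fin K)) (v' : RTree (PL Q' (Option D))), SpineTr rkD K v κ v' →
        SpineTr rkD K (psubst vs t) κ (psubst [v'] t') := by
  induction h with
  | prleaf jf' =>
    intro vs v hv κ v' hsp
    injection hκ with hκ; subst hκ
    have h1 : psubst vs (RTree.node (PL.pr (Q := Q) (D := D) jf'.val) []) = v := by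
      simp [psubst, List.getD_eq_getElem?_getD, hv]
    have h2 : psubst [v'] (RTree.node (PL.pr (Q := Q') (D := Option D) 0) []) = v' := by
      simp [psubst, List.getD_eq_getElem?_getD]
    rw [h1, h2]; exact hsp
  | ground hd => simp at hκ
  | cons hd hh ih =>
    intro vs v hv κ v' hsp
    have := ih hκ vs v hv κ v' hsp
    simpa [psubst, psubstList] using SpineTr.cons hd this

end SpineLemmas

section MapLemmas

variable {α β : Type}

theorem rtree_map_node (f : α → β) (a : α) (ts : List (RTree α)) :
    RTree.map f (RTree.node a ts) = RTree.node (f a) (RTree.mapList f ts) := by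
  rw [RTree.map]

theorem mapList_nil (f : α → β) : RTree.mapList f [] = [] := by rw [RTree.mapList]

theorem mapList_cons (f : α → β) (t : RTree α) (ts : List (RTree α)) :
    RTree.mapList f (t :: ts) = RTree.map f t :: RTree.mapList f ts := by
  rw [RTree.mapList]

theorem mapList_eq_nil {f : α → β} {ts : List (RTree α)}
    (h : RTree.mapList f ts = []) : ts = [] := by
  cases ts with
  | nil => rfl
  | cons t ts => rw [mapList_cons] at h; simp at h

theorem mapList_eq_singleton {f : α → β} {ts : List (RTree α)} {x : RTree β}
    (h : RTree.mapList f ts = [x]) : ∃ t, ts = [t] ∧ RTree.map f t = x := by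
  cases ts with
  | nil => rw [mapList_nil] at h; simp at h
  | cons t ts =>
    rw [mapList_cons] at h
    simp at h
    exact ⟨t, by rw [mapList_eq_nil h.2], h.1⟩

end MapLemmas

section ExpandLemmas

variable {α : Type}

theorem expandRel_det {s : RTree α} {T T' : RTree (Option α)}
    (h1 : ExpandRel s T) (h2 : ExpandRel s T') : T = T' := by
  induction h1 generalizing T' with
  | leaf => cases h2; rfl
  | step h ih => cases h2 with | step h' => rw [ih h']

theorem expandRel_wf {s : RTree α} {T : RTree (Option α)} (h : ExpandRel s T) :
    RTree.WF expandRk T := by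
  induction h with
  | leaf =>
    exact RTree.WF.node (by simp [expandRk]) (by
      intro t ht; simp at ht; subst ht
      exact RTree.WF.node (by simp [expandRk]) (by simp))
  | step h ih =>
    exact RTree.WF.node (by simp [expandRk]) (by intro t ht; simp at ht; subst ht; exact ih)

end ExpandLemmas

section MapSpine

variable {Q Q' S D : Type} {rkD : D → ℕ} {K : ℕ}

theorem mapSpine_src {w : RTree (PL Q D)} {κ : Option (Fin K)}
    {u' : RTree (PL Q' (Option D))} (h : SpineTr rkD K w κ u') :
    ∀ t : RTree D, w = RTree.map PL.out t →
      κ = none ∧ ∃ U, ExpandRel t U ∧ u' = RTree.map PL.out U ∧ RTree.WF rkD t := by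
  induction h with
  | prleaf jf =>
    intro t ht
    cases t with | node a ts => rw [rtree_map_node] at ht; simp at ht
  | @ground d hd =>
    intro t ht
    cases t with | node a ts =>
    rw [rtree_map_node] at ht
    injection ht with h1 h2
    injection h1 with h1; subst h1
    have := mapList_eq_nil h2.symm; subst this
    refine ⟨rfl, RTree.node (some d) [RTree.node none []], ExpandRel.leaf, ?_, ?_⟩
    · simp [rtree_map_node, mapList_cons, mapList_nil]
    · exact RTree.WF.node (by simpa using hd.symm) (by simp)
  | @cons d w κ u' hd hh ih =>
    intro t ht
    cases t with | node a ts =>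
    rw [rtree_map_node] at ht
    injection ht with h1 h2
    injection h1 with h1; subst h1
    obtain ⟨t1, hts, hmt⟩ := mapList_eq_singleton h2.symm
    subst hts
    obtain ⟨hκ, U1, hrel, hu', hwf⟩ := ih t1 hmt.symm
    refine ⟨hκ, RTree.node (some d) [U1], ExpandRel.step hrel, ?_, ?_⟩
    · simp [rtree_map_node, mapList_cons, mapList_nil, hu']
    · exact RTree.WF.node (by simpa using hd.symm)
        (by intro x hx; simp at hx; subst hx; exact hwf)

theorem mapSpine_tgt {u : RTree (PL Q D)} {κ : Option (Fin K)}
    {u' : RTree (PL Q' (Option D))} (h : SpineTr rkD K u κ u') :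
    ∀ U : RTree (Option D), u' = RTree.map PL.out U →
      κ = none ∧ ∃ t, u = RTree.map PL.out t ∧ ExpandRel t U := by
  induction h with
  | prleaf jf =>
    intro U hU
    cases U with | node a ts => rw [rtree_map_node] at hU; simp at hU
  | @ground d hd =>
    intro U hU
    cases U with | node a ts =>
    rw [rtree_map_node] at hU
    injection hU with h1 h2
    injection h1 with h1
    cases a with
    | none => simp at h1
    | some a =>
      injection h1 with h1; subst h1
      obtain ⟨U1, hts, hm1⟩ := mapList_eq_singleton h2.symm
      subst hts
      cases U1 with | node b us =>
      rw [rtree_map_node] at hm1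
      injection hm1 with h3 h4
      cases b with
      | some b => simp at h3
      | none =>
        have := mapList_eq_nil h4
        subst this
        refine ⟨rfl, RTree.node d [], ?_, ExpandRel.leaf⟩
        simp [rtree_map_node, mapList_nil]
  | @cons d u κ u' hd hh ih =>
    intro U hU
    cases U with | node a ts =>
    rw [rtree_map_node] at hU
    injection hU with h1 h2
    injection h1 with h1
    cases a with
    | none => simp at h1
    | some a =>
      injection h1 with h1; subst h1
      obtain ⟨U1, hts, hm1⟩ := mapList_eq_singleton h2.symm
      subst hts
      obtain ⟨hκ, t1, hu, hrel⟩ := ih U1 hm1.symm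
      refine ⟨hκ, RTree.node d [t1], ?_, ExpandRel.step hrel⟩
      simp [rtree_map_node, mapList_cons, mapList_nil, hu]

end MapSpine
section InfoListLemmas

variable {Q S D : Type} {K : ℕ} {f : Q → Option (Option (Fin K))}

theorem leafInfoList_some_cons {t : MRhs Q D} {ts : List (MRhs Q D)}
    {κs : List (Option (Fin K))} (h : leafInfoList K f (t :: ts) = some κs) :
    ∃ κ κs', leafInfo K f t = some κ ∧ leafInfoList K f ts = some κs' ∧
      κs = κ :: κs' := by
  rw [leafInfoList] at h
  cases h1 : leafInfo K f t with
  | none => rw [h1] at h; simp at h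
  | some κ =>
    cases h2 : leafInfoList K f ts with
    | none => rw [h1, h2] at h; simp at h
    | some κs' =>
      rw [h1, h2] at h; simp at h
      exact ⟨κ, κs', rfl, rfl, h.symm⟩

theorem leafInfoList_length {rs : List (MRhs Q D)} {κs : List (Option (Fin K))} :
    leafInfoList K f rs = some κs → κs.length = rs.length := by
  induction rs generalizing κs with
  | nil => intro h; rw [leafInfoList] at h; simp at h; simp [h.symm]
  | cons t ts ih =>
    intro h
    obtain ⟨κ, κs', h1, h2, rfl⟩ := leafInfoList_some_cons h
    simp [ih h2]

theorem leafInfoList_get {rs : List (MRhs Q D)} {κs : List (Option (Fin K))} :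
    leafInfoList K f rs = some κs → ∀ (j : ℕ) (pj : MRhs Q D),
      rs[j]? = some pj → κs[j]? = leafInfo K f pj := by
  induction rs generalizing κs with
  | nil => intro h j pj hj; simp at hj
  | cons t ts ih =>
    intro h j pj hj
    obtain ⟨κ, κs', h1, h2, rfl⟩ := leafInfoList_some_cons h
    cases j with
    | zero => simp at hj; subst hj; simp [h1]
    | succ j => simp at hj ⊢; exact ih h2 j pj hj

theorem leafInfoList_of_parts {rs : List (MRhs Q D)}
    (h : ∀ r ∈ rs, ∃ κ, leafInfo K f r = some κ) :
    ∃ κs, leafInfoList K f rs = some κs := by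
  induction rs with
  | nil => exact ⟨[], by rw [leafInfoList]⟩
  | cons t ts ih =>
    obtain ⟨κ, hκ⟩ := h t (by simp)
    obtain ⟨κs, hκs⟩ := ih (fun r hr => h r (by simp [hr]))
    exact ⟨κ :: κs, by rw [leafInfoList, hκ, hκs]⟩

end InfoListLemmas

section Shape

variable {Q S D P : Type} (M : MTTR Q S D P) [Fintype Q]

/-- Shape of the result of a rule evaluation: rhs-level, parameterized. -/
theorem shape_X (hmon : M.Monadic) :
    ∀ (n : ℕ) (ss : List (RTree S)) (k : ℕ), k ≤ 1 → ss.length = k →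
      ∀ (_ : ∀ si, si ∈ ss → ∀ q t, REval M q si t →
        ∃ κ t', SpineTr (Q' := NQ M) M.rkD (Kk M) t κ t' ∧
          ∀ jf, κ = some jf → jf.val < M.prm q)
        (r : MRhs Q D), sizeOf r ≤ n → ∀ m, RhsWF M.rkD M.prm k m r → m ≤ Kk M →
        ∀ u, RExpand M ss r u →
          ∃ κ u', SpineTr (Q' := NQ M) M.rkD (Kk M) u κ u' ∧
            ∀ jf, κ = some jf → jf.val < m := by
  intro n
  induction n with
  | zero => intro ss k hk hlen HE r hr; cases r <;> simp at hr
  | succ n ih =>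
    intro ss k hk hlen HE r hr m hwf hm u hex
    cases r with
    | out d ts =>
      cases hex with | out hus =>
      cases hwf with | out hts hall =>
      cases ts with
      | nil =>
        cases hus
        exact ⟨none, _, SpineTr.ground (by simp at hts; omega), by simp⟩
      | cons t1 ts' =>
        cases ts' with
        | cons t2 ts'' => have := hmon.2 d; simp at hts; omega
        | nil =>
          cases hus with | cons hu1 hus' =>
          cases hus'
          simp at hr
          obtain ⟨κ, u1', hsp, hb⟩ := ih ss k hk hlen HE t1 (by omega) m
            (hall t1 (by simp)) hm _ hu1
          exact ⟨κ, _, SpineTr.cons (by simp at hts; omega) hsp, hb⟩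
    | param j =>
      cases hex
      cases hwf with | param hj =>
      refine ⟨some ⟨j, by omega⟩, _, SpineTr.prleaf ⟨j, by omega⟩, ?_⟩
      intro jf hjf; injection hjf with hjf; subst hjf; exact hj
    | call q' i ps =>
      cases hex with | @call _ _ _ _ si vs u0 hsi hvs hev =>
      cases hwf with | call hik hlenps hall =>
      obtain ⟨κ0, u0', hsp0, hb0⟩ := HE si (List.mem_of_getElem? hsi) q' u0 hev
      cases κ0 with
      | none =>
        refine ⟨none, u0', ?_, by simp⟩
        rw [(spine_ground_psubst hsp0 rfl).1 vs]
        exact hsp0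
      | some j0 =>
        have hj0 : j0.val < ps.length := by rw [hlenps]; exact hb0 j0 rfl
        have hpj : ps[j0.val]? = some ps[j0.val] := List.getElem?_eq_getElem hj0
        obtain ⟨v, hv, hexv⟩ := rexpandList_get hvs j0.val _ hpj
        have hsz : sizeOf (ps[j0.val]) < sizeOf (MRhs.call q' i ps) := by
          have := sizeOf_of_getElem? hpj; simp; omega
        obtain ⟨κv, v', hspv, hbv⟩ := ih ss k hk hlen HE ps[j0.val]
          (by simp at hr hsz ⊢; omega) m (hall _ (List.getElem_mem hj0)) hm v hexv
        exact ⟨κv, _, spine_param_psubst hsp0 rfl vs v hv κv v' hspv, hbv⟩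

/-- Shape of the result of an evaluation of `M`: every value of `M_q(s)` is a
monadic chain ending in a parameter `< prm q` or in a rank-0 output symbol. -/
theorem shape_E (hM : M.Proper) (hmon : M.Monadic) :
    ∀ (n : ℕ) (s : RTree S), sizeOf s ≤ n → RTree.WF M.rkS s →
      ∀ q t, REval M q s t →
        ∃ κ t', SpineTr (Q' := NQ M) M.rkD (Kk M) t κ t' ∧
          ∀ jf, κ = some jf → jf.val < M.prm q := by
  intro n
  induction n with
  | zero => intro s hs; cases s with | node a ts => simp at hs
  | succ n ih =>
    intro s hs hwf q t hev
    cases hev with | @step _ σ ss ps r _ hps hrule hex =>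
    cases hwf with | node hlen hallwf =>
    have HE : ∀ si, si ∈ ss → ∀ q t, REval M q si t →
        ∃ κ t', SpineTr (Q' := NQ M) M.rkD (Kk M) t κ t' ∧
          ∀ jf, κ = some jf → jf.val < M.prm q := by
      intro si hsi q' t' hev'
      have : sizeOf si < sizeOf (RTree.node σ ss) := by
        have := List.sizeOf_lt_of_mem hsi; simp; omega
      exact ih si (by omega) (hallwf si hsi) q' t' hev'
    exact shape_X M hmon (sizeOf r) ss (M.rkS σ) (hmon.1 σ) hlen HE r le_rfl
      (M.prm q) (hM.2 q σ ps r hrule) (prm_le_Kk M q) t hex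

theorem shape_E' (hM : M.Proper) (hmon : M.Monadic) {s : RTree S}
    (hwf : RTree.WF M.rkS s) {q : Q} {t : RTree (PL Q D)} (hev : REval M q s t) :
    ∃ κ t', SpineTr (Q' := NQ M) M.rkD (Kk M) t κ t' ∧
      ∀ jf, κ = some jf → jf.val < M.prm q :=
  shape_E M hM hmon (sizeOf s) s le_rfl hwf q t hev

theorem shape_X' (hM : M.Proper) (hmon : M.Monadic) {ss : List (RTree S)} {k : ℕ}
    (hk : k ≤ 1) (hlen : ss.length = k) (hwfs : ∀ si ∈ ss, RTree.WF M.rkS si)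
    {r : MRhs Q D} {m : ℕ} (hwf : RhsWF M.rkD M.prm k m r) (hm : m ≤ Kk M)
    {u : RTree (PL Q D)} (hex : RExpand M ss r u) :
    ∃ κ u', SpineTr (Q' := NQ M) M.rkD (Kk M) u κ u' ∧
      ∀ jf, κ = some jf → jf.val < m :=
  shape_X M hmon (sizeOf r) ss k hk hlen
    (fun si hsi q t hev => shape_E' M hM hmon (hwfs si hsi) hev) r le_rfl m hwf hm u hex

end Shape
section L2

variable {Q S D P : Type} (M : MTTR Q S D P) [Fintype Q]

/-- The central rhs-level lemma: `leafInfo` and `trRhs` correctly predict and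
translate the evaluation of a right-hand side. -/
theorem L2 (hM : M.Proper) (hmon : M.Monadic) {k : ℕ} (hk : k ≤ 1)
    (ss : List (RTree S)) (hlen : ss.length = k) (c : RTree (Option S))
    (f : Q → Option (Option (Fin (Kk M))))
    (HC : ∀ s1, ss[0]? = some s1 →
      RTree.WF M.rkS s1 ∧
      (∀ q κ, f q = some κ ↔ ∃ t t', REval M q s1 t ∧
        SpineTr (Q' := NQ M) M.rkD (Kk M) t κ t') ∧
      (∀ q κ t t', REval M q s1 t → SpineTr (Q' := NQ M) M.rkD (Kk M) t κ t' →
        REval (NN M) (q, κ) c t')) :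
    ∀ n : ℕ,
      (∀ r : MRhs Q D, sizeOf r ≤ n → ∀ m, RhsWF M.rkD M.prm k m r → m ≤ Kk M →
        ∀ κ, leafInfo (Kk M) f r = some κ →
          ∃ u u' r', RExpand M ss r u ∧ SpineTr (Q' := NQ M) M.rkD (Kk M) u κ u' ∧
            trRhs (Kk M) f r = some r' ∧ RExpand (NN M) [c] r' u') ∧
      (∀ rs : List (MRhs Q D), sizeOf rs ≤ n →
        ∀ m, (∀ r ∈ rs, RhsWF M.rkD M.prm k m r) → m ≤ Kk M →
        ∀ κs, leafInfoList (Kk M) f rs = some κs →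
          ∃ vs, RExpandList M ss rs vs) ∧
      (∀ r : MRhs Q D, sizeOf r ≤ n → ∀ m, RhsWF M.rkD M.prm k m r → m ≤ Kk M →
        ∀ u κ u', RExpand M ss r u → SpineTr (Q' := NQ M) M.rkD (Kk M) u κ u' →
          leafInfo (Kk M) f r = some κ ∧ ∃ r', trRhs (Kk M) f r = some r' ∧
            RExpand (NN M) [c] r' u') ∧
      (∀ rs : List (MRhs Q D), sizeOf rs ≤ n →
        ∀ m, (∀ r ∈ rs, RhsWF M.rkD M.prm k m r) → m ≤ Kk M →
        ∀ us, RExpandList M ss rs us →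
          ∃ κs, leafInfoList (Kk M) f rs = some κs) := by
  have hwfs : ∀ si ∈ ss, RTree.WF M.rkS si := by
    intro si hsi
    obtain ⟨j, hj, hget⟩ := List.mem_iff_getElem.1 hsi
    have hj0 : j = 0 := by omega
    subst hj0
    exact (HC si (by rw [List.getElem?_eq_getElem hj, hget])).1
  intro n
  induction n with
  | zero =>
    refine ⟨fun r hr => by cases r <;> simp at hr,
      fun rs hrs => by cases rs <;> simp at hrs,
      fun r hr => by cases r <;> simp at hr,
      fun rs hrs => by cases rs <;> simp at hrs⟩
  | succ n ih =>
    obtain ⟨ihA, ihAL, ihB, ihBL⟩ := ih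
    refine ⟨?_, ?_, ?_, ?_⟩
    -- Part A : leafInfo → evaluation
    · intro r hr m hwf hm κ hli
      cases r with
      | out d ts =>
        cases ts with
        | nil =>
          rw [leafInfo] at hli
          injection hli with hli; subst hli
          cases hwf with | out hts hall =>
          refine ⟨RTree.node (PL.out d) [], _, MRhs.out (some d) [.out none []],
            RExpand.out RExpandList.nil, SpineTr.ground (by simp at hts; omega),
            by rw [trRhs], RExpand.out (RExpandList.cons (RExpand.out RExpandList.nil)
              RExpandList.nil)⟩
        | cons t1 ts' =>
          cases hwf with | out hts hall =>
          cases ts' with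
          | cons t2 ts'' => have := hmon.2 d; simp at hts; omega
          | nil =>
            rw [leafInfo] at hli
            simp at hr
            obtain ⟨u, u', rt', hexu, hspu, htr, hexN⟩ :=
              ihA t1 (by omega) m (hall t1 (by simp)) hm κ hli
            refine ⟨RTree.node (PL.out d) [u], RTree.node (PL.out (some d)) [u'],
              MRhs.out (some d) [rt'],
              RExpand.out (RExpandList.cons hexu RExpandList.nil),
              SpineTr.cons (by simp at hts; omega) hspu, ?_, ?_⟩
            · rw [trRhs, htr]; rfl
            · exact RExpand.out (RExpandList.cons hexN RExpandList.nil)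
      | param j =>
        rw [leafInfo] at hli
        cases hwf with | param hj =>
        have hjK : j < Kk M := by omega
        rw [dif_pos hjK] at hli
        injection hli with hli; subst hli
        refine ⟨RTree.node (PL.pr j) [], _, _, RExpand.param,
          SpineTr.prleaf ⟨j, hjK⟩, by rw [trRhs], RExpand.param⟩
      | call q' i ps =>
        cases hwf with | call hik hlenps hall =>
        -- i = 0, k = 1, ss = [s1]
        have hi0 : i = 0 := by omega
        subst hi0
        have hk1 : k = 1 := by omega
        obtain ⟨s1, hss⟩ : ∃ s1, ss = [s1] := by
          cases ss with
          | nil => simp [hk1] at hlen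
          | cons s1 ss' =>
            cases ss' with
            | nil => exact ⟨s1, rfl⟩
            | cons a b => simp [hk1] at hlen
        have hs1 : ss[0]? = some s1 := by rw [hss]; rfl
        obtain ⟨hwf1, hIC, hFW⟩ := HC s1 hs1
        rw [leafInfo] at hli
        simp at hr
        cases hL : leafInfoList (Kk M) f ps with
        | none => rw [hL] at hli; cases hf : f q' <;> rw [hf] at hli <;> simp at hli
        | some κs =>
          obtain ⟨vs, hvs⟩ := ihAL ps (by omega) m hall hm κs hL
          cases hf : f q' with
          | none => rw [hL, hf] at hli; simp at hli
          | some κ0 =>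
            obtain ⟨t0, t0', hev0, hsp0⟩ := (hIC q' κ0).1 hf
            cases κ0 with
            | none =>
              rw [hL, hf] at hli
              injection hli with hli; subst hli
              refine ⟨psubst vs t0, t0', MRhs.call (q', none) 0 [],
                RExpand.call hs1 hvs hev0, ?_, ?_, ?_⟩
              · rw [(spine_ground_psubst hsp0 rfl).1 vs]; exact hsp0
              · rw [trRhs_call_ground hf]
              · have := RExpand.call (M := NN M) (ss := [c]) (ps := [])
                  (q := (q', none)) (i := 0) (by rfl) RExpandList.nil
                  (hFW q' none t0 t0' hev0 hsp0)
                rwa [(spine_ground_psubst hsp0 rfl).2 []] at this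
            | some j0 =>
              rw [hL, hf] at hli
              have hli2 : κs[j0.val]? = some κ := hli
              have hj0len : j0.val < ps.length := by
                have h1 := leafInfoList_length (f := f) hL
                have h2 : j0.val < κs.length := by
                  by_contra hcon
                  rw [List.getElem?_eq_none (by omega)] at hli2
                  simp at hli2
                omega
              have hpj : ps[j0.val]? = some ps[j0.val] := List.getElem?_eq_getElem hj0len
              have hlig : leafInfo (Kk M) f ps[j0.val] = some κ := by
                rw [← leafInfoList_get hL j0.val _ hpj]; exact hli2
              have hsz : sizeOf (ps[j0.val]) < sizeOf ps := sizeOf_of_getElem? hpj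
              obtain ⟨up, up', pj', hexp, hspp, htrp, hexNp⟩ :=
                ihA ps[j0.val] (by omega) m (hall _ (List.getElem_mem hj0len)) hm κ hlig
              obtain ⟨v, hv, hexv⟩ := rexpandList_get hvs j0.val _ hpj
              have hveq : v = up := rexpand_det' hexv hexp
              subst hveq
              refine ⟨psubst vs t0, psubst [up'] t0',
                MRhs.call (q', some j0) 0 [pj'],
                RExpand.call hs1 hvs hev0,
                spine_param_psubst hsp0 rfl vs v hv κ up' hspp, ?_, ?_⟩
              · rw [trRhs_call_sel hf, trRhsNth_eq_of_get hpj, htrp]; rfl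
              · exact RExpand.call (M := NN M) (ss := [c]) (i := 0)
                  (show [c][0]? = some c from rfl)
                  (RExpandList.cons hexNp RExpandList.nil)
                  (hFW q' (some j0) t0 t0' hev0 hsp0)
    -- Part AL
    · intro rs hrs m hall hm κs hL
      cases rs with
      | nil => exact ⟨[], RExpandList.nil⟩
      | cons r rs' =>
        obtain ⟨κ, κs', h1, h2, rfl⟩ := leafInfoList_some_cons hL
        simp at hrs
        obtain ⟨u, u', r', hexu, _, _, _⟩ :=
          ihA r (by omega) m (hall r (by simp)) hm κ h1
        obtain ⟨vs, hvs⟩ := ihAL rs' (by omega) m (fun x hx => hall x (by simp [hx])) hm κs' h2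
        exact ⟨u :: vs, RExpandList.cons hexu hvs⟩
    -- Part B : evaluation → leafInfo
    · intro r hr m hwf hm u κ u' hex hsp
      cases r with
      | out d ts =>
        cases hex with | @out _ _ _ us hus =>
        cases hwf with | out hts hall =>
        cases ts with
        | nil =>
          cases hus
          -- u = node (out d) [] ; spine must be ground
          cases hsp with
          | ground hd =>
            refine ⟨by rw [leafInfo], _, by rw [trRhs], ?_⟩
            exact RExpand.out (RExpandList.cons (RExpand.out RExpandList.nil)
              RExpandList.nil)
        | cons t1 ts' =>
          cases ts' with
          | cons t2 ts'' => have := hmon.2 d; simp at hts; omega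
          | nil =>
            cases hus with | cons hu1 hus' =>
            cases hus'
            simp at hr
            cases hsp with
            | cons hd hsp1 =>
              obtain ⟨hli1, r1', htr1, hexN1⟩ :=
                ihB t1 (by omega) m (hall t1 (by simp)) hm _ _ _ hu1 hsp1
              refine ⟨by rw [leafInfo]; exact hli1, _, by rw [trRhs, htr1]; rfl, ?_⟩
              exact RExpand.out (RExpandList.cons hexN1 RExpandList.nil)
      | param j =>
        cases hex
        cases hwf with | param hj =>
        have inv : ∀ (κ2' : Option (Fin (Kk M))) (t2' : RTree (PL (NQ M) (Option D))),
            SpineTr (Q' := NQ M) M.rkD (Kk M) (RTree.node (PL.pr (Q := Q) (D := D) j) []) κ2' t2' →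
            ∃ jf' : Fin (Kk M), κ2' = some jf' ∧ jf'.val = j ∧
              t2' = .node (.pr 0) [] := by
          intro κ2' t2' h
          cases h with | prleaf jf' => exact ⟨jf', rfl, rfl, rfl⟩
        obtain ⟨jf, rfl, hval, rfl⟩ := inv κ u' hsp
        have hjK : j < Kk M := by omega
        constructor
        · rw [leafInfo, dif_pos hjK]
          congr 1; exact congrArg some (Fin.ext hval.symm)
        · exact ⟨_, by rw [trRhs], RExpand.param⟩
      | call q' i ps =>
        cases hex with | @call _ _ _ _ si vs u0 hsi hvs hev =>
        cases hwf with | call hik hlenps hall =>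
        have hi0 : i = 0 := by omega
        subst hi0
        obtain ⟨hwf1, hIC, hFW⟩ := HC si hsi
        simp at hr
        obtain ⟨κs, hL⟩ := ihBL ps (by omega) m hall hm vs hvs
        obtain ⟨κ0, u0', hsp0, hb0⟩ := shape_E' M hM hmon hwf1 hev
        have hfq : f q' = some κ0 := (hIC q' κ0).2 ⟨u0, u0', hev, hsp0⟩
        cases κ0 with
        | none =>
          have heq : psubst vs u0 = u0 := (spine_ground_psubst hsp0 rfl).1 vs
          rw [heq] at hsp
          obtain ⟨hκ, hu'⟩ := spineTr_det hsp hsp0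
          subst hκ
          refine ⟨by rw [leafInfo_call_ground hL hfq], _, by rw [trRhs_call_ground hfq], ?_⟩
          have := RExpand.call (M := NN M) (ss := [c]) (ps := [])
            (q := (q', none)) (i := 0) (by rfl) RExpandList.nil
            (hFW q' none u0 u' hev (by rw [hu']; exact hsp0))
          rwa [(spine_ground_psubst hsp rfl).2 []] at this
        | some j0 =>
          have hj0 : j0.val < ps.length := by rw [hlenps]; exact hb0 j0 rfl
          have hpj : ps[j0.val]? = some ps[j0.val] := List.getElem?_eq_getElem hj0
          obtain ⟨v, hv, hexv⟩ := rexpandList_get hvs j0.val _ hpj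
          obtain ⟨κv, v', hspv, _⟩ := shape_X' M hM hmon hk hlen hwfs
            (hall _ (List.getElem_mem hj0)) hm hexv
          have hsp2 := spine_param_psubst hsp0 rfl vs v hv κv v' hspv
          obtain ⟨hκ, hu'⟩ := spineTr_det hsp hsp2
          subst hκ
          have hsz : sizeOf (ps[j0.val]) < sizeOf ps := sizeOf_of_getElem? hpj
          obtain ⟨hliv, pj', htrp, hexNp⟩ :=
            ihB ps[j0.val] (by omega) m (hall _ (List.getElem_mem hj0)) hm v κ v' hexv hspv
          constructor
          · rw [leafInfo_call_sel hL hfq, leafInfoList_get hL j0.val _ hpj]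
            exact hliv
          · refine ⟨MRhs.call (q', some j0) 0 [pj'],
              by rw [trRhs_call_sel hfq, trRhsNth_eq_of_get hpj, htrp]; rfl, ?_⟩
            rw [hu']
            exact RExpand.call (M := NN M) (ss := [c]) (i := 0)
              (show [c][0]? = some c from rfl)
              (RExpandList.cons hexNp RExpandList.nil)
              (hFW q' (some j0) u0 u0' hev hsp0)
    -- Part BL
    · intro rs hrs m hall hm us hus
      cases rs with
      | nil => exact ⟨[], by rw [leafInfoList]⟩
      | cons r rs' =>
        cases hus with | @cons _ _ _ u us' hu hus' =>
        simp at hrs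
        obtain ⟨κu, u', hspu, _⟩ := shape_X' M hM hmon hk hlen hwfs
          (hall r (by simp)) hm hu
        obtain ⟨hli1, _, _, _⟩ := ihB r (by omega) m (hall r (by simp)) hm u κu u' hu hspu
        obtain ⟨κs', hL'⟩ := ihBL rs' (by omega) m (fun x hx => hall x (by simp [hx])) hm us' hus'
        exact ⟨κu :: κs', by rw [leafInfoList, hli1, hL']⟩

end L2
section Mega

variable {Q S D P : Type} (M : MTTR Q S D P) [Fintype Q]

theorem laRunList_singleton {S' P' : Type} {A : LA S' P'} {x : RTree S'} {ps : List P'}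
    (h : LARunList A [x] ps) : ∃ p, ps = [p] ∧ LARun A x p := by
  cases h with | cons h1 h2 => cases h2; exact ⟨_, rfl, h1⟩

theorem NN_la_delta : (NN M).la.delta = ndelta M := rfl

theorem ndelta_leaf {σ : S} {p : P} (h0 : M.rkS σ = 0)
    (hδ : M.la.delta σ [] = some p) :
    ndelta M (some σ) [none] =
      some (some (p, fun q => (M.rules q σ []).bind (leafInfo (Kk M) fun _ => none))) := by
  simp [ndelta, h0, hδ]

theorem ndelta_inner {σ : S} {p p1 : P} {f1 : Q → Option (Option (Fin (Kk M)))}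
    (h1 : M.rkS σ = 1) (hδ : M.la.delta σ [p1] = some p) :
    ndelta M (some σ) [some (p1, f1)] =
      some (some (p, fun q => (M.rules q σ [p1]).bind (leafInfo (Kk M) f1))) := by
  simp [ndelta, h1, hδ]

theorem NN_rules_leaf {σ : S} {q : Q} {κ : Option (Fin (Kk M))}
    (h0 : M.rkS σ = 0) {r : MRhs Q D} {r' : MRhs (NQ M) (Option D)}
    (hrule : M.rules q σ [] = some r)
    (hli : leafInfo (Kk M) (fun _ => none) r = some κ)
    (htr : trRhs (Kk M) (fun _ => none) r = some r') :
    (NN M).rules (q, κ) (some σ) [none] = some r' := by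
  simp [NN, h0, hrule, hli, htr]

theorem NN_rules_inner {σ : S} {q : Q} {κ : Option (Fin (Kk M))}
    {p1 : P} {f1 : Q → Option (Option (Fin (Kk M)))}
    (h1 : M.rkS σ = 1) {r : MRhs Q D} {r' : MRhs (NQ M) (Option D)}
    (hrule : M.rules q σ [p1] = some r)
    (hli : leafInfo (Kk M) f1 r = some κ)
    (htr : trRhs (Kk M) f1 r = some r') :
    (NN M).rules (q, κ) (some σ) [some (p1, f1)] = some r' := by
  simp [NN, h1, hrule, hli, htr]

theorem bot_run : LARun (NN M).la (RTree.node none []) none :=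
  LARun.node LARunList.nil rfl

/-- The main simulation lemma at tree level. -/
theorem MEGA (hM : M.Proper) (hmon : M.Monadic) :
    ∀ {s : RTree S} {T : RTree (Option S)}, ExpandRel s T → RTree.WF M.rkS s →
      (∀ (q : Q) (κ : Option (Fin (Kk M))) t t', REval M q s t →
        SpineTr (Q' := NQ M) M.rkD (Kk M) t κ t' → REval (NN M) (q, κ) T t') ∧
      (∀ p, LARun M.la s p → ∃ f, LARun (NN M).la T (some (p, f)) ∧
        ∀ (q : Q) (κ : Option (Fin (Kk M))), f q = some κ ↔
          ∃ t t', REval M q s t ∧ SpineTr (Q' := NQ M) M.rkD (Kk M) t κ t') := by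
  intro s T hrel
  induction hrel with
  | @leaf a =>
    intro hwf
    cases hwf with | node hlen hall =>
    simp at hlen
    have HC : ∀ s1 : RTree S, ([] : List (RTree S))[0]? = some s1 →
        RTree.WF M.rkS s1 ∧
        (∀ (q : Q) (κ : Option (Fin (Kk M))), (fun (_ : Q) => none) q = some κ ↔
          ∃ t t', REval M q s1 t ∧ SpineTr (Q' := NQ M) M.rkD (Kk M) t κ t') ∧
        (∀ (q : Q) (κ : Option (Fin (Kk M))) t t', REval M q s1 t →
          SpineTr (Q' := NQ M) M.rkD (Kk M) t κ t' →
          REval (NN M) (q, κ) (RTree.node none []) t') := by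
      intro s1 h; simp at h
    constructor
    · intro q κ t t' hev hsp
      cases hev with | @step _ _ ss0 ps r _ hps hrule hex =>
      cases hps
      obtain ⟨hli, r', htr, hexN⟩ :=
        ((L2 M hM hmon (k := 0) (by omega) [] rfl (RTree.node none [])
          (fun _ => none) HC (sizeOf r)).2.2.1) r le_rfl (M.prm q)
          (by have := hM.2 q a [] r hrule; rwa [← hlen] at this)
          (prm_le_Kk M q) t κ t' hex hsp
      exact REval.step
        (LARunList.cons (bot_run M) LARunList.nil)
        (NN_rules_leaf M hlen.symm hrule hli htr) hexN
    · intro p hrun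
      cases hrun with | @node _ _ ps _ hps hδ =>
      cases hps
      refine ⟨fun q => (M.rules q a []).bind (leafInfo (Kk M) fun _ => none),
        LARun.node (LARunList.cons (bot_run M) LARunList.nil)
          (ndelta_leaf M hlen.symm hδ), ?_⟩
      intro q κ
      constructor
      · intro hfq
        obtain ⟨r, hrule, hli⟩ := Option.bind_eq_some_iff.1 hfq
        obtain ⟨u, u', r', hexu, hspu, _, _⟩ :=
          ((L2 M hM hmon (k := 0) (by omega) [] rfl (RTree.node none [])
            (fun _ => none) HC (sizeOf r)).1) r le_rfl (M.prm q)
            (by have := hM.2 q a [] r hrule; rwa [← hlen] at this)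
            (prm_le_Kk M q) κ hli
        exact ⟨u, u', REval.step LARunList.nil hrule hexu, hspu⟩
      · rintro ⟨t, t', hev, hsp⟩
        cases hev with | @step _ _ ss0 ps r _ hps hrule hex =>
        cases hps
        obtain ⟨hli, _, _, _⟩ :=
          ((L2 M hM hmon (k := 0) (by omega) [] rfl (RTree.node none [])
            (fun _ => none) HC (sizeOf r)).2.2.1) r le_rfl (M.prm q)
            (by have := hM.2 q a [] r hrule; rwa [← hlen] at this)
            (prm_le_Kk M q) t κ t' hex hsp
        show (M.rules q a []).bind (leafInfo (Kk M) fun _ => none) = some κ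
        rw [hrule]; simpa using hli
  | @step a s1 T1 hrel1 ih =>
    intro hwf
    cases hwf with | node hlen hall =>
    simp at hlen
    have hwf1 : RTree.WF M.rkS s1 := hall s1 (by simp)
    obtain ⟨IH1, IH2⟩ := ih hwf1
    have HC : ∀ (f1 : Q → Option (Option (Fin (Kk M)))),
        (∀ (q : Q) (κ : Option (Fin (Kk M))), f1 q = some κ ↔
          ∃ t t', REval M q s1 t ∧ SpineTr (Q' := NQ M) M.rkD (Kk M) t κ t') →
        ∀ s1' : RTree S, [s1][0]? = some s1' →
        RTree.WF M.rkS s1' ∧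
        (∀ (q : Q) (κ : Option (Fin (Kk M))), f1 q = some κ ↔
          ∃ t t', REval M q s1' t ∧ SpineTr (Q' := NQ M) M.rkD (Kk M) t κ t') ∧
        (∀ (q : Q) (κ : Option (Fin (Kk M))) t t', REval M q s1' t →
          SpineTr (Q' := NQ M) M.rkD (Kk M) t κ t' → REval (NN M) (q, κ) T1 t') := by
      intro f1 hIC s1' h
      simp at h; subst h
      exact ⟨hwf1, hIC, IH1⟩
    constructor
    · intro q κ t t' hev hsp
      cases hev with | @step _ _ ss0 ps r _ hps hrule hex =>
      obtain ⟨p1, rfl, hp1⟩ := laRunList_singleton hps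
      obtain ⟨f1, hNrun1, hIC1⟩ := IH2 p1 hp1
      obtain ⟨hli, r', htr, hexN⟩ :=
        ((L2 M hM hmon (k := 1) (by omega) [s1] rfl T1 f1 (HC f1 hIC1) (sizeOf r)).2.2.1)
          r le_rfl (M.prm q)
          (by have := hM.2 q a [p1] r hrule; rwa [← hlen] at this)
          (prm_le_Kk M q) t κ t' hex hsp
      exact REval.step (LARunList.cons hNrun1 LARunList.nil)
        (NN_rules_inner M hlen.symm hrule hli htr) hexN
    · intro p hrun
      cases hrun with | @node _ _ ps _ hps hδ =>
      obtain ⟨p1, rfl, hp1⟩ := laRunList_singleton hps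
      obtain ⟨f1, hNrun1, hIC1⟩ := IH2 p1 hp1
      refine ⟨fun q => (M.rules q a [p1]).bind (leafInfo (Kk M) f1),
        LARun.node (LARunList.cons hNrun1 LARunList.nil)
          (ndelta_inner M hlen.symm hδ), ?_⟩
      intro q κ
      constructor
      · intro hfq
        obtain ⟨r, hrule, hli⟩ := Option.bind_eq_some_iff.1 hfq
        obtain ⟨u, u', r', hexu, hspu, _, _⟩ :=
          ((L2 M hM hmon (k := 1) (by omega) [s1] rfl T1 f1 (HC f1 hIC1) (sizeOf r)).1)
            r le_rfl (M.prm q)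
            (by have := hM.2 q a [p1] r hrule; rwa [← hlen] at this)
            (prm_le_Kk M q) κ hli
        exact ⟨u, u', REval.step (LARunList.cons hp1 LARunList.nil) hrule hexu, hspu⟩
      · rintro ⟨t, t', hev, hsp⟩
        cases hev with | @step _ _ ss0 ps r _ hps hrule hex =>
        obtain ⟨p1', rfl, hp1'⟩ := laRunList_singleton hps
        have hpe : p1' = p1 := laRun_det' hp1' hp1
        rw [hpe] at hrule
        obtain ⟨hli, _, _, _⟩ :=
          ((L2 M hM hmon (k := 1) (by omega) [s1] rfl T1 f1 (HC f1 hIC1) (sizeOf r)).2.2.1)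
            r le_rfl (M.prm q)
            (by have := hM.2 q a [p1] r hrule; rwa [← hlen] at this)
            (prm_le_Kk M q) t κ t' hex hsp
        show (M.rules q a [p1]).bind (leafInfo (Kk M) f1) = some κ
        rw [hrule]; simpa using hli

end Mega
section Sound

variable {Q S D P : Type} (M : MTTR Q S D P) [Fintype Q]

theorem laRunList_singleton' {S' P' : Type} {A : LA S' P'} {ss : List (RTree S')}
    {p : P'} (h : LARunList A ss [p]) : ∃ s, ss = [s] ∧ LARun A s p := by
  cases h with | cons h1 h2 => cases h2; exact ⟨_, rfl, h1⟩


theorem ndelta_some_none {a : Option S} {πs : List (NP M)}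
    (h : ndelta M a πs = some none) : a = none ∧ πs = [] := by
  cases a with
  | none =>
    cases πs with
    | nil => exact ⟨rfl, rfl⟩
    | cons x xs => simp [ndelta] at h
  | some σ =>
    exfalso
    cases πs with
    | nil => simp [ndelta] at h
    | cons x xs =>
      cases xs with
      | cons y ys =>
        cases x with
        | none => simp [ndelta] at h
        | some pf => obtain ⟨p1, f1⟩ := pf; simp [ndelta] at h
      | nil =>
        cases x with
        | none =>
          simp only [ndelta] at h
          split at h
          · simp [Option.map_eq_some_iff] at h
          · simp at h
        | some pf =>
          obtain ⟨p1, f1⟩ := pf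
          simp only [ndelta] at h
          split at h
          · simp [Option.map_eq_some_iff] at h
          · simp at h

theorem ndelta_some_some {a : Option S} {πs : List (NP M)} {p : P}
    {f : Q → Option (Option (Fin (Kk M)))}
    (h : ndelta M a πs = some (some (p, f))) :
    ∃ σ, a = some σ ∧
      ((M.rkS σ = 0 ∧ πs = [none] ∧ M.la.delta σ [] = some p ∧
        f = fun q => (M.rules q σ []).bind (leafInfo (Kk M) fun _ => none)) ∨
       (∃ p0 f0, M.rkS σ = 1 ∧ πs = [some (p0, f0)] ∧ M.la.delta σ [p0] = some p ∧
        f = fun q => (M.rules q σ [p0]).bind (leafInfo (Kk M) f0))) := by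
  cases a with
  | none =>
    exfalso
    cases πs with
    | nil => simp [ndelta] at h
    | cons x xs => simp [ndelta] at h
  | some σ =>
    refine ⟨σ, rfl, ?_⟩
    cases πs with
    | nil => simp [ndelta] at h
    | cons x xs =>
      cases xs with
      | cons y ys =>
        exfalso
        cases x with
        | none => simp [ndelta] at h
        | some pf => obtain ⟨p1, f1⟩ := pf; simp [ndelta] at h
      | nil =>
        cases x with
        | none =>
          left
          simp only [ndelta] at h
          split at h
          · rename_i h0
            obtain ⟨p', hp', heq⟩ := Option.map_eq_some_iff.1 h
            injection heq with heq
            injection heq with h1 h2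
            subst h1
            exact ⟨h0, rfl, hp', h2.symm⟩
          · simp at h
        | some pf =>
          obtain ⟨p1, f1⟩ := pf
          right
          simp only [ndelta] at h
          split at h
          · rename_i h1
            obtain ⟨p', hp', heq⟩ := Option.map_eq_some_iff.1 h
            injection heq with heq
            injection heq with he1 he2
            subst he1
            exact ⟨p1, f1, h1, rfl, hp', he2.symm⟩
          · simp at h

theorem larun_none_bot {c : RTree (Option S)}
    (h : LARun (NN M).la c none) : c = RTree.node none [] := by
  cases h with | @node a cs πs _ hπ hδ =>
  obtain ⟨ha, hπs⟩ := ndelta_some_none M hδ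
  subst ha; subst hπs
  cases hπ
  rfl

/-- Soundness of the look-ahead of `NN M`. -/
theorem L1 : ∀ (n : ℕ) (T : RTree (Option S)), sizeOf T ≤ n →
    ∀ (p : P) (f : Q → Option (Option (Fin (Kk M)))),
      LARun (NN M).la T (some (p, f)) →
      ∃ s, ExpandRel s T ∧ RTree.WF M.rkS s ∧ LARun M.la s p := by
  intro n
  induction n with
  | zero => intro T hT; cases T with | node a ts => simp at hT
  | succ n ih =>
    intro T hT p f hrun
    cases hrun with | @node a cs πs _ hπ hδ =>
    obtain ⟨σ, rfl, hcase⟩ := ndelta_some_some M hδ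
    rcases hcase with ⟨h0, rfl, hδ0, _⟩ | ⟨p0, f0, h1, rfl, hδ0, _⟩
    · obtain ⟨c, rfl, hc⟩ := laRunList_singleton' hπ
      have hcbot := larun_none_bot M hc
      subst hcbot
      exact ⟨RTree.node σ [], ExpandRel.leaf,
        RTree.WF.node (by simpa using h0.symm) (by simp),
        LARun.node LARunList.nil hδ0⟩
    · obtain ⟨c, rfl, hc⟩ := laRunList_singleton' hπ
      have hsz : sizeOf c < sizeOf (RTree.node (some σ) [c]) := by simp; omega
      obtain ⟨s0, hrel0, hwf0, hrun0⟩ := ih c (by omega) p0 f0 hc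
      exact ⟨RTree.node σ [s0], ExpandRel.step hrel0,
        RTree.WF.node (by simpa using h1.symm)
          (by intro x hx; simp at hx; subst hx; exact hwf0),
        LARun.node (LARunList.cons hrun0 LARunList.nil) hδ0⟩

/-- Inversion for the rules of `NN M`. -/
theorem NN_rules_inv {q : Q} {κ : Option (Fin (Kk M))} {a : Option S}
    {πs : List (NP M)} {r' : MRhs (NQ M) (Option D)}
    (h : (NN M).rules (q, κ) a πs = some r') :
    ∃ σ, a = some σ ∧
      ((M.rkS σ = 0 ∧ πs = [none] ∧ ∃ r, M.rules q σ [] = some r ∧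
        leafInfo (Kk M) (fun _ => none) r = some κ ∧
        trRhs (Kk M) (fun _ => none) r = some r') ∨
       (∃ p1 f1, M.rkS σ = 1 ∧ πs = [some (p1, f1)] ∧ ∃ r, M.rules q σ [p1] = some r ∧
        leafInfo (Kk M) f1 r = some κ ∧ trRhs (Kk M) f1 r = some r')) := by
  cases a with
  | none =>
    exfalso
    cases πs with
    | nil => simp [NN] at h
    | cons x xs => simp [NN] at h
  | some σ =>
    refine ⟨σ, rfl, ?_⟩
    cases πs with
    | nil => simp [NN] at h
    | cons x xs =>
      cases xs with
      | cons y ys =>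
        exfalso
        cases x with
        | none => simp [NN] at h
        | some pf => obtain ⟨p1, f1⟩ := pf; simp [NN] at h
      | nil =>
        cases x with
        | none =>
          left
          simp only [NN] at h
          split at h
          · rename_i h0
            obtain ⟨r, hrule, hr⟩ := Option.bind_eq_some_iff.1 h
            refine ⟨h0, rfl, r, hrule, ?_⟩
            split at hr
            · rename_i hli; exact ⟨hli, hr⟩
            · simp at hr
          · simp at h
        | some pf =>
          obtain ⟨p1, f1⟩ := pf
          right
          simp only [NN] at h
          split at h
          · rename_i h1
            obtain ⟨r, hrule, hr⟩ := Option.bind_eq_some_iff.1 h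
            refine ⟨p1, f1, h1, rfl, r, hrule, ?_⟩
            split at hr
            · rename_i hli; exact ⟨hli, hr⟩
            · simp at hr
          · simp at h

end Sound
section WfTr

variable {Q S D P : Type} (M : MTTR Q S D P) [Fintype Q]

/-- Rank of a target state given the leaf kind. -/
def mKappa {K : ℕ} : Option (Fin K) → ℕ
  | none => 0
  | some _ => 1

theorem NN_prm (q : Q) (κ : Option (Fin (Kk M))) : (NN M).prm (q, κ) = mKappa κ := by
  cases κ <;> rfl

theorem trRhs_wf (hmon : M.Monadic) :
    ∀ (n : ℕ) (r : MRhs Q D), sizeOf r ≤ n → ∀ {k m : ℕ}, k ≤ 1 →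
      RhsWF M.rkD M.prm k m r →
      ∀ {f : Q → Option (Option (Fin (Kk M)))} {κ : Option (Fin (Kk M))}
        {r' : MRhs (NQ M) (Option D)},
        leafInfo (Kk M) f r = some κ → trRhs (Kk M) f r = some r' →
        RhsWF (NN M).rkD (NN M).prm 1 (mKappa κ) r' := by
  intro n
  induction n with
  | zero => intro r hr; cases r <;> simp at hr
  | succ n ih =>
    intro r hr k m hk hwf f κ r' hli htr
    cases r with
    | out d ts =>
      cases hwf with | out hts hall =>
      cases ts with
      | nil =>
        rw [leafInfo] at hli
        injection hli with hli; subst hli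
        rw [trRhs] at htr
        injection htr with htr; subst htr
        refine RhsWF.out (by rfl) ?_
        intro x hx; simp at hx; subst hx
        exact RhsWF.out (by rfl) (by simp)
      | cons t1 ts' =>
        rw [leafInfo] at hli
        rw [trRhs] at htr
        obtain ⟨t1', htr1, rfl⟩ := Option.map_eq_some_iff.1 htr
        simp at hr
        have := ih t1 (by omega) hk (hall t1 (by simp)) hli htr1
        refine RhsWF.out (by rfl) ?_
        intro x hx; simp at hx; subst hx
        exact this
    | param j =>
      cases hwf with | param hj =>
      rw [leafInfo] at hli
      split at hli
      · injection hli with hli; subst hli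
        rw [trRhs] at htr
        injection htr with htr; subst htr
        exact RhsWF.param (by simp [mKappa])
      · simp at hli
    | call q' i ps =>
      cases hwf with | call hik hlenps hall =>
      rw [leafInfo] at hli
      cases hL : leafInfoList (Kk M) f ps with
      | none => rw [hL] at hli; cases hf : f q' <;> rw [hf] at hli <;> simp at hli
      | some κs =>
        cases hf : f q' with
        | none => rw [hL, hf] at hli; simp at hli
        | some κ0 =>
          cases κ0 with
          | none =>
            rw [hL, hf] at hli
            injection hli with hli; subst hli
            rw [trRhs_call_ground hf] at htr
            injection htr with htr; subst htr
            refine RhsWF.call (by omega) (by rfl) (by simp)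
          | some j0 =>
            rw [hL, hf] at hli
            have hli2 : κs[j0.val]? = some κ := hli
            have hj0len : j0.val < ps.length := by
              have h1 := leafInfoList_length (f := f) hL
              have h2 : j0.val < κs.length := by
                by_contra hcon
                rw [List.getElem?_eq_none (by omega)] at hli2
                simp at hli2
              omega
            have hpj : ps[j0.val]? = some ps[j0.val] := List.getElem?_eq_getElem hj0len
            have hlig : leafInfo (Kk M) f ps[j0.val] = some κ := by
              rw [← leafInfoList_get hL j0.val _ hpj]; exact hli2
            rw [trRhs_call_sel hf, trRhsNth_eq_of_get hpj] at htr
            obtain ⟨pj', htrp, rfl⟩ := Option.map_eq_some_iff.1 htr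
            have hsz : sizeOf (ps[j0.val]) < sizeOf ps := sizeOf_of_getElem? hpj
            simp at hr
            have := ih ps[j0.val] (by omega) hk (hall _ (List.getElem_mem hj0len)) hlig htrp
            refine RhsWF.call (by omega) (by rfl) ?_
            intro x hx; simp at hx; subst hx
            exact this

theorem trRhs_occurs :
    ∀ (n : ℕ) (r : MRhs Q D), sizeOf r ≤ n →
      ∀ {f : Q → Option (Option (Fin (Kk M)))} {jf : Fin (Kk M)}
        {r' : MRhs (NQ M) (Option D)},
        leafInfo (Kk M) f r = some (some jf) → trRhs (Kk M) f r = some r' →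
        ParamOccurs 0 r' := by
  intro n
  induction n with
  | zero => intro r hr; cases r <;> simp at hr
  | succ n ih =>
    intro r hr f jf r' hli htr
    cases r with
    | out d ts =>
      cases ts with
      | nil => rw [leafInfo] at hli; simp at hli
      | cons t1 ts' =>
        rw [leafInfo] at hli
        rw [trRhs] at htr
        obtain ⟨t1', htr1, rfl⟩ := Option.map_eq_some_iff.1 htr
        simp at hr
        exact ParamOccurs.out (by simp) (ih t1 (by omega) hli htr1)
    | param j =>
      rw [trRhs] at htr
      injection htr with htr; subst htr
      exact ParamOccurs.param
    | call q' i ps =>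
      rw [leafInfo] at hli
      cases hL : leafInfoList (Kk M) f ps with
      | none => rw [hL] at hli; cases hf : f q' <;> rw [hf] at hli <;> simp at hli
      | some κs =>
        cases hf : f q' with
        | none => rw [hL, hf] at hli; simp at hli
        | some κ0 =>
          cases κ0 with
          | none => rw [hL, hf] at hli; simp at hli
          | some j0 =>
            rw [hL, hf] at hli
            have hli2 : κs[j0.val]? = some (some jf) := hli
            have hj0len : j0.val < ps.length := by
              have h1 := leafInfoList_length (f := f) hL
              have h2 : j0.val < κs.length := by
                by_contra hcon
                rw [List.getElem?_eq_none (by omega)] at hli2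
                simp at hli2
              omega
            have hpj : ps[j0.val]? = some ps[j0.val] := List.getElem?_eq_getElem hj0len
            have hlig : leafInfo (Kk M) f ps[j0.val] = some (some jf) := by
              rw [← leafInfoList_get hL j0.val _ hpj]; exact hli2
            rw [trRhs_call_sel hf, trRhsNth_eq_of_get hpj] at htr
            obtain ⟨pj', htrp, rfl⟩ := Option.map_eq_some_iff.1 htr
            have hsz : sizeOf (ps[j0.val]) < sizeOf ps := sizeOf_of_getElem? hpj
            simp at hr
            exact ParamOccurs.call (by simp) (ih ps[j0.val] (by omega) hlig htrp)

end WfTr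
/-! ## Statement 17

For every monadic deterministic macro tree transducer with regular look-ahead `M`
one can construct a normalized monadic deterministic macro tree transducer with
regular look-ahead `N` such that
`τ_N = {(expand(s), expand(t)) | (s, t) ∈ τ_M}`. -/
theorem monadic_mttr_normalization {Q S D P : Type}
    [Fintype Q] [Fintype S] [Fintype D] [Fintype P]
    (M : MTTR Q S D P) (hM : MTTR.Proper M) (hmon : MTTR.Monadic M) :
    ∃ (Q' : Type) (_ : Fintype Q') (P' : Type) (_ : Fintype P')
      (N : MTTR Q' (Option S) (Option D) P'),
      N.rkS = expandRk ∧ N.rkD = expandRk ∧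
      MTTR.Proper N ∧ MTTR.Monadic N ∧ MTTR.Normalized N ∧
      MTTR.tau N = {p : RTree (Option S) × RTree (Option D) |
        ∃ s t, (s, t) ∈ MTTR.tau M ∧ ExpandRel s p.1 ∧ ExpandRel t p.2} := by
  classical
  refine ⟨NQ M, inferInstance, NP M, inferInstance, NN M, rfl, rfl, ?_, ?_, ?_, ?_⟩
  -- Proper
  · constructor
    · rfl
    · rintro ⟨q0, κ⟩ σ' πs r' h
      obtain ⟨σ, rfl, hcase⟩ := NN_rules_inv M h
      have hrk : (NN M).rkS (some σ) = 1 := rfl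
      rw [hrk, NN_prm M q0 κ]
      rcases hcase with ⟨h0, _, r, hrule, hli, htr⟩ | ⟨p1, f1, h1, _, r, hrule, hli, htr⟩
      · have hw := hM.2 q0 σ [] r hrule
        rw [h0] at hw
        exact trRhs_wf M hmon (sizeOf r) r le_rfl (by omega) hw hli htr
      · have hw := hM.2 q0 σ [p1] r hrule
        rw [h1] at hw
        exact trRhs_wf M hmon (sizeOf r) r le_rfl (by omega) hw hli htr
  -- Monadic
  · exact ⟨fun σ' => by cases σ' <;> simp [NN, expandRk],
      fun d' => by cases d' <;> simp [NN, expandRk]⟩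
  -- Normalized
  · refine ⟨?_, ?_, ?_, ?_⟩
    · rintro ⟨q0, κ⟩ σ' πs r' h j hj
      cases κ with
      | none => rw [NN_prm] at hj; simp [mKappa] at hj
      | some jf =>
        rw [NN_prm] at hj
        simp [mKappa] at hj
        subst hj
        obtain ⟨σ, rfl, hcase⟩ := NN_rules_inv M h
        rcases hcase with ⟨_, _, r, _, hli, htr⟩ | ⟨p1, f1, _, _, r, _, hli, htr⟩
        · exact trRhs_occurs M (sizeOf r) r le_rfl hli htr
        · exact trRhs_occurs M (sizeOf r) r le_rfl hli htr
    · rintro ⟨q0, κ⟩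
      rw [NN_prm]
      cases κ <;> simp [mKappa]
    · refine ⟨none, rfl, ?_⟩
      intro y hy
      cases y with
      | none => rfl
      | some y => simp [NN, expandRk] at hy
    · refine ⟨none, rfl, ?_⟩
      intro y hy
      cases y with
      | none => rfl
      | some y => simp [NN, expandRk] at hy
  -- tau
  · apply Set.eq_of_subset_of_subset
    · rintro ⟨T, U⟩ hmem
      simp only [MTTR.tau, Set.mem_setOf_eq] at hmem ⊢
      obtain ⟨hwfT, hev⟩ := hmem
      cases hev with | @step _ a cs πs r' _ hπ hrule hex =>
      have hrule' : (NN M).rules (M.init, none) a πs = some r' := hrule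
      obtain ⟨σ, rfl, hcase⟩ := NN_rules_inv M hrule'
      rcases hcase with ⟨h0, hπs, r, hruleM, hli, htr⟩ |
        ⟨p1, f1, h1, hπs, r, hruleM, hli, htr⟩
      · subst hπs
        obtain ⟨c, rfl, hc⟩ := laRunList_singleton' hπ
        have hcbot := larun_none_bot M hc
        subst hcbot
        obtain ⟨u, u', r'', hexu, hspu, htr'', hexN⟩ :=
          (L2 M hM hmon (k := 0) (by omega) [] rfl (RTree.node none [])
            (fun _ => none) (fun s1 h => by simp at h) (sizeOf r)).1 r le_rfl
            (M.prm M.init)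
            (by have := hM.2 M.init σ [] r hruleM; rwa [h0] at this)
            (prm_le_Kk M _) none hli
        have hr'' : r'' = r' := by rw [htr''] at htr; exact Option.some.inj htr
        subst hr''
        have hUu : RTree.map PL.out U = u' := rexpand_det' hex hexN
        obtain ⟨_, t, hu, hrelU⟩ := mapSpine_tgt hspu U hUu.symm
        refine ⟨RTree.node σ [], t,
          ⟨RTree.WF.node (by simp [h0]) (by simp), ?_⟩, ExpandRel.leaf, hrelU⟩
        exact REval.step LARunList.nil hruleM (by rwa [hu] at hexu)
      · subst hπs
        obtain ⟨c, rfl, hc⟩ := laRunList_singleton' hπ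
        obtain ⟨s1, hrel1, hwf1, hrun1⟩ := L1 M (sizeOf c) c le_rfl p1 f1 hc
        obtain ⟨FW1, IC2⟩ := MEGA M hM hmon hrel1 hwf1
        obtain ⟨f1', hNrun1, hIC1⟩ := IC2 p1 hrun1
        have hfe : f1 = f1' := by
          have h2 := Option.some.inj (laRun_det' hc hNrun1)
          exact congrArg Prod.snd h2
        rw [← hfe] at hIC1
        obtain ⟨u, u', r'', hexu, hspu, htr'', hexN⟩ :=
          (L2 M hM hmon (k := 1) (by omega) [s1] rfl c f1
            (fun s1' hh => by
              simp at hh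
              subst hh
              exact ⟨hwf1, hIC1, FW1⟩) (sizeOf r)).1 r le_rfl (M.prm M.init)
            (by have := hM.2 M.init σ [p1] r hruleM; rwa [h1] at this)
            (prm_le_Kk M _) none hli
        have hr'' : r'' = r' := by rw [htr''] at htr; exact Option.some.inj htr
        subst hr''
        have hUu : RTree.map PL.out U = u' := rexpand_det' hex hexN
        obtain ⟨_, t, hu, hrelU⟩ := mapSpine_tgt hspu U hUu.symm
        refine ⟨RTree.node σ [s1], t,
          ⟨RTree.WF.node (by simp [h1])
            (by intro x hx; simp at hx; subst hx; exact hwf1), ?_⟩,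
          ExpandRel.step hrel1, hrelU⟩
        exact REval.step (LARunList.cons hrun1 LARunList.nil) hruleM
          (by rwa [hu] at hexu)
    · rintro ⟨T, U⟩ hmem
      simp only [MTTR.tau, Set.mem_setOf_eq] at hmem ⊢
      obtain ⟨s, t, ⟨hwfs, hev⟩, hes, het⟩ := hmem
      refine ⟨expandRel_wf hes, ?_⟩
      obtain ⟨κ, w', hsp, _⟩ := shape_E' M hM hmon hwfs hev
      obtain ⟨hκ, U0, hrelU0, hw', _⟩ := mapSpine_src hsp t rfl
      subst hκ
      have hU0 : U0 = U := expandRel_det hrelU0 het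
      subst hU0
      have hfin := (MEGA M hM hmon hes hwfs).1 M.init none _ _ hev hsp
      rw [hw'] at hfin
      exact hfin
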